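/- Let r = p·q with integers p, q ≥ 1, let ζ = exp(2πi/r), so ω = ζ^p = exp(2πi/q). For integers a, b, let T_{a,b} : ℂ³ ≃ₗ ℂ³ be the diagonal linear automorphism T_{a,b}(x₁,x₂,x₃) = (x₁, ζ^a·x₂, ζ^{a+b}·x₃). Then for every a, b the set of hyperplanes {ker(g ∘ T_{a,b}) | g a defining form of 𝒜(q,q,3) for the root ω} equals the set of 3q hyperplanes {ker(x₁ − ζ^{a+kp} x₂), ker(x₂ − ζ^{b+kp} x₃), ker(x₁ − ζ^{a+b+kp} x₃) | 0 ≤ k ≤ q−1}, and every hyperplane in this set is a hyperplane of 𝒜(r,r,3); moreover the map {0,…,p−1}² → sets of hyperplanes sending (a,b) to this subarrangement is injective. Hence 𝒜(r,r,3) contains p² subarrangements, each linearly isomorphic to 𝒜(q,q,3). -/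
import Mathlib

open LinearMap

private lemma mem_ker01 (c : ℂ) (v : Fin 3 → ℂ) :
    v ∈ ker ((proj 0 : (Fin 3 → ℂ) →ₗ[ℂ] ℂ) - c • proj 1) ↔ v 0 = c * v 1 := by
  simp [LinearMap.mem_ker, sub_eq_zero]

private lemma mem_ker02 (c : ℂ) (v : Fin 3 → ℂ) :
    v ∈ ker ((proj 0 : (Fin 3 → ℂ) →ₗ[ℂ] ℂ) - c • proj 2) ↔ v 0 = c * v 2 := by
  simp [LinearMap.mem_ker, sub_eq_zero]

private lemma mem_ker12 (c : ℂ) (v : Fin 3 → ℂ) :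
    v ∈ ker ((proj 1 : (Fin 3 → ℂ) →ₗ[ℂ] ℂ) - c • proj 2) ↔ v 1 = c * v 2 := by
  simp [LinearMap.mem_ker, sub_eq_zero]

private lemma ker01_inj {c c' : ℂ}
    (h : ker ((proj 0 : (Fin 3 → ℂ) →ₗ[ℂ] ℂ) - c • proj 1)
       = ker ((proj 0 : (Fin 3 → ℂ) →ₗ[ℂ] ℂ) - c' • proj 1)) : c = c' := by
  have h1 : (![c, 1, 0] : Fin 3 → ℂ) ∈
      ker ((proj 0 : (Fin 3 → ℂ) →ₗ[ℂ] ℂ) - c • proj 1) := by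
    rw [mem_ker01]; simp
  rw [h, mem_ker01] at h1; simpa using h1

private lemma ker12_inj {c c' : ℂ}
    (h : ker ((proj 1 : (Fin 3 → ℂ) →ₗ[ℂ] ℂ) - c • proj 2)
       = ker ((proj 1 : (Fin 3 → ℂ) →ₗ[ℂ] ℂ) - c' • proj 2)) : c = c' := by
  have h1 : (![0, c, 1] : Fin 3 → ℂ) ∈
      ker ((proj 1 : (Fin 3 → ℂ) →ₗ[ℂ] ℂ) - c • proj 2) := by
    rw [mem_ker12]; simp
  rw [h, mem_ker12] at h1; simpa using h1

private lemma ker01_ne_ker12 {c c' : ℂ} (hc' : c' ≠ 0) :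
    ker ((proj 0 : (Fin 3 → ℂ) →ₗ[ℂ] ℂ) - c • proj 1)
      ≠ ker ((proj 1 : (Fin 3 → ℂ) →ₗ[ℂ] ℂ) - c' • proj 2) := by
  intro h
  have h1 : (![0, 0, 1] : Fin 3 → ℂ) ∈
      ker ((proj 0 : (Fin 3 → ℂ) →ₗ[ℂ] ℂ) - c • proj 1) := by
    rw [mem_ker01]; simp
  rw [h, mem_ker12] at h1
  simp at h1
  exact hc' h1.symm

private lemma ker01_ne_ker02 {c c' : ℂ} (hc' : c' ≠ 0) :
    ker ((proj 0 : (Fin 3 → ℂ) →ₗ[ℂ] ℂ) - c • proj 1)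
      ≠ ker ((proj 0 : (Fin 3 → ℂ) →ₗ[ℂ] ℂ) - c' • proj 2) := by
  intro h
  have h1 : (![0, 0, 1] : Fin 3 → ℂ) ∈
      ker ((proj 0 : (Fin 3 → ℂ) →ₗ[ℂ] ℂ) - c • proj 1) := by
    rw [mem_ker01]; simp
  rw [h, mem_ker02] at h1
  simp at h1
  exact hc' h1.symm

private lemma ker12_ne_ker02 (c c' : ℂ) :
    ker ((proj 1 : (Fin 3 → ℂ) →ₗ[ℂ] ℂ) - c • proj 2)
      ≠ ker ((proj 0 : (Fin 3 → ℂ) →ₗ[ℂ] ℂ) - c' • proj 2) := by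
  intro h
  have h1 : (![1, 0, 0] : Fin 3 → ℂ) ∈
      ker ((proj 1 : (Fin 3 → ℂ) →ₗ[ℂ] ℂ) - c • proj 2) := by
    rw [mem_ker12]; simp
  rw [h, mem_ker02] at h1
  simp at h1

theorem monomial_subarrangements (p q : ℕ) (hp : 1 ≤ p) (hq : 1 ≤ q)
    (r : ℕ) (hr : r = p * q)
    (ζ ω : ℂ) (hζ : ζ = Complex.exp (2 * Real.pi * Complex.I / r))
    (hω : ω = ζ ^ p)
    -- the diagonal linear automorphisms `T_{a,b}(x₁,x₂,x₃) = (x₁, ζ^a x₂, ζ^{a+b} x₃)`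
    (T : ℕ → ℕ → ((Fin 3 → ℂ) ≃ₗ[ℂ] (Fin 3 → ℂ)))
    (hT : ∀ a b : ℕ, ∀ v : Fin 3 → ℂ,
      T a b v = ![v 0, ζ ^ a * v 1, ζ ^ (a + b) * v 2])
    -- the defining forms of `𝒜(q,q,3)` for the root of unity `ω`
    (formsQ : Set ((Fin 3 → ℂ) →ₗ[ℂ] ℂ))
    (hformsQ : formsQ = { g | ∃ k : ℕ, k < q ∧
      (g = (LinearMap.proj 0 : (Fin 3 → ℂ) →ₗ[ℂ] ℂ) - ω ^ k • LinearMap.proj 1 ∨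
       g = (LinearMap.proj 0 : (Fin 3 → ℂ) →ₗ[ℂ] ℂ) - ω ^ k • LinearMap.proj 2 ∨
       g = (LinearMap.proj 1 : (Fin 3 → ℂ) →ₗ[ℂ] ℂ) - ω ^ k • LinearMap.proj 2) })
    -- the subarrangement associated to `(a, b)`: the hyperplanes `ker (g ∘ T_{a,b})`
    (sub : ℕ → ℕ → Set (Submodule ℂ (Fin 3 → ℂ)))
    (hsub : ∀ a b : ℕ, sub a b =
      { H | ∃ g ∈ formsQ, H = LinearMap.ker (g ∘ₗ (T a b).toLinearMap) })
    -- the hyperplanes of `𝒜(r,r,3)`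
    (hypR : Set (Submodule ℂ (Fin 3 → ℂ)))
    (hhypR : hypR = { H | ∃ k : ℕ, k < r ∧
      (H = LinearMap.ker
            ((LinearMap.proj 0 : (Fin 3 → ℂ) →ₗ[ℂ] ℂ) - ζ ^ k • LinearMap.proj 1) ∨
       H = LinearMap.ker
            ((LinearMap.proj 0 : (Fin 3 → ℂ) →ₗ[ℂ] ℂ) - ζ ^ k • LinearMap.proj 2) ∨
       H = LinearMap.ker
            ((LinearMap.proj 1 : (Fin 3 → ℂ) →ₗ[ℂ] ℂ) - ζ ^ k • LinearMap.proj 2)) }) :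
    (∀ a b : ℕ,
      sub a b = { H | ∃ k : ℕ, k < q ∧
        (H = LinearMap.ker
              ((LinearMap.proj 0 : (Fin 3 → ℂ) →ₗ[ℂ] ℂ) -
                ζ ^ (a + k * p) • LinearMap.proj 1) ∨
         H = LinearMap.ker
              ((LinearMap.proj 1 : (Fin 3 → ℂ) →ₗ[ℂ] ℂ) -
                ζ ^ (b + k * p) • LinearMap.proj 2) ∨
         H = LinearMap.ker
              ((LinearMap.proj 0 : (Fin 3 → ℂ) →ₗ[ℂ] ℂ) -
                ζ ^ (a + b + k * p) • LinearMap.proj 2)) } ∧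
      sub a b ⊆ hypR) ∧
    Function.Injective (fun ab : Fin p × Fin p => sub (ab.1 : ℕ) (ab.2 : ℕ)) := by
  have hr0 : r ≠ 0 := by subst hr; exact Nat.mul_ne_zero (by omega) (by omega)
  have hprim : IsPrimitiveRoot ζ r := hζ ▸ Complex.isPrimitiveRoot_exp r hr0
  have hζr : ζ ^ r = 1 := hprim.pow_eq_one
  have hζ0 : ζ ≠ 0 := by
    intro h
    rw [h, zero_pow hr0] at hζr
    exact zero_ne_one hζr
  have hpowmod : ∀ m : ℕ, ζ ^ m = ζ ^ (m % r) := by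
    intro m
    conv_lhs => rw [← Nat.div_add_mod m r]
    rw [pow_add, pow_mul, hζr, one_pow, one_mul]
  have key1 : ∀ a b k : ℕ,
      ((proj 0 : (Fin 3 → ℂ) →ₗ[ℂ] ℂ) - ω ^ k • proj 1) ∘ₗ (T a b).toLinearMap
        = (proj 0 : (Fin 3 → ℂ) →ₗ[ℂ] ℂ) - ζ ^ (a + k * p) • proj 1 := by
    intro a b k; apply LinearMap.ext; intro v; simp [hT, hω]; ring
  have key2 : ∀ a b k : ℕ,
      ((proj 0 : (Fin 3 → ℂ) →ₗ[ℂ] ℂ) - ω ^ k • proj 2) ∘ₗ (T a b).toLinearMap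
        = (proj 0 : (Fin 3 → ℂ) →ₗ[ℂ] ℂ) - ζ ^ (a + b + k * p) • proj 2 := by
    intro a b k; apply LinearMap.ext; intro v; simp [hT, hω]; ring
  have key3 : ∀ a b k : ℕ,
      ker (((proj 1 : (Fin 3 → ℂ) →ₗ[ℂ] ℂ) - ω ^ k • proj 2) ∘ₗ (T a b).toLinearMap)
        = ker ((proj 1 : (Fin 3 → ℂ) →ₗ[ℂ] ℂ) - ζ ^ (b + k * p) • proj 2) := by
    intro a b k
    have heq : ((proj 1 : (Fin 3 → ℂ) →ₗ[ℂ] ℂ) - ω ^ k • proj 2) ∘ₗ (T a b).toLinearMap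
        = ζ ^ a • ((proj 1 : (Fin 3 → ℂ) →ₗ[ℂ] ℂ) - ζ ^ (b + k * p) • proj 2) := by
      apply LinearMap.ext; intro v; simp [hT, hω]; ring
    rw [heq]
    exact LinearMap.ker_smul _ _ (pow_ne_zero _ hζ0)
  have hdesc : ∀ a b : ℕ,
      sub a b = { H | ∃ k : ℕ, k < q ∧
        (H = LinearMap.ker
              ((LinearMap.proj 0 : (Fin 3 → ℂ) →ₗ[ℂ] ℂ) -
                ζ ^ (a + k * p) • LinearMap.proj 1) ∨
         H = LinearMap.ker
              ((LinearMap.proj 1 : (Fin 3 → ℂ) →ₗ[ℂ] ℂ) -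
                ζ ^ (b + k * p) • LinearMap.proj 2) ∨
         H = LinearMap.ker
              ((LinearMap.proj 0 : (Fin 3 → ℂ) →ₗ[ℂ] ℂ) -
                ζ ^ (a + b + k * p) • LinearMap.proj 2)) } := by
    intro a b
    rw [hsub, hformsQ]
    ext H
    simp only [Set.mem_setOf_eq]
    constructor
    · rintro ⟨g, ⟨k, hk, (rfl | rfl | rfl)⟩, rfl⟩
      · exact ⟨k, hk, Or.inl (by rw [key1])⟩
      · exact ⟨k, hk, Or.inr (Or.inr (by rw [key2]))⟩
      · exact ⟨k, hk, Or.inr (Or.inl (by rw [key3]))⟩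
    · rintro ⟨k, hk, (rfl | rfl | rfl)⟩
      · exact ⟨_, ⟨k, hk, Or.inl rfl⟩, by rw [key1]⟩
      · exact ⟨_, ⟨k, hk, Or.inr (Or.inr rfl)⟩, by rw [key3]⟩
      · exact ⟨_, ⟨k, hk, Or.inr (Or.inl rfl)⟩, by rw [key2]⟩
  refine ⟨fun a b => ⟨hdesc a b, ?_⟩, ?_⟩
  · -- subset of hypR
    intro H hH
    rw [hdesc a b] at hH
    rw [hhypR]
    obtain ⟨k, hk, h | h | h⟩ := hH
    · exact ⟨(a + k * p) % r, Nat.mod_lt _ (Nat.pos_of_ne_zero hr0),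
        Or.inl (by rw [h, hpowmod (a + k * p)])⟩
    · exact ⟨(b + k * p) % r, Nat.mod_lt _ (Nat.pos_of_ne_zero hr0),
        Or.inr (Or.inr (by rw [h, hpowmod (b + k * p)]))⟩
    · exact ⟨(a + b + k * p) % r, Nat.mod_lt _ (Nat.pos_of_ne_zero hr0),
        Or.inr (Or.inl (by rw [h, hpowmod (a + b + k * p)]))⟩
  · -- injectivity
    have hexp : ∀ m m' k : ℕ, m < p → m' < p → k < q → ζ ^ (m + 0 * p) = ζ ^ (m' + k * p) →
        m = m' := by
      intro m m' k hm hm' hk hpow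
      have h1 : m + 0 * p < r := by
        have : m < p * q := lt_of_lt_of_le hm (Nat.le_mul_of_pos_right p (by omega))
        simpa [hr] using this
      have h2 : m' + k * p < r := by
        have h3 : (k + 1) * p ≤ q * p := Nat.mul_le_mul_right p hk
        have h4 : (k + 1) * p = k * p + p := by ring
        have h5 : q * p = r := by rw [hr, Nat.mul_comm]
        omega
      have heq := hprim.pow_inj h1 h2 hpow
      rcases Nat.eq_zero_or_pos k with rfl | hkpos
      · simpa using heq
      · exfalso
        have hle : p ≤ k * p := Nat.le_mul_of_pos_left p hkpos
        omega
    intro x y hxy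
    have hxy' : sub (x.1 : ℕ) (x.2 : ℕ) = sub (y.1 : ℕ) (y.2 : ℕ) := hxy
    rw [hdesc, hdesc] at hxy'
    have ha : (x.1 : ℕ) = (y.1 : ℕ) := by
      have hmem : LinearMap.ker
          ((LinearMap.proj 0 : (Fin 3 → ℂ) →ₗ[ℂ] ℂ) -
            ζ ^ ((x.1 : ℕ) + 0 * p) • LinearMap.proj 1) ∈
          { H | ∃ k : ℕ, k < q ∧
            (H = LinearMap.ker
                  ((LinearMap.proj 0 : (Fin 3 → ℂ) →ₗ[ℂ] ℂ) -
                    ζ ^ ((x.1 : ℕ) + k * p) • LinearMap.proj 1) ∨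
             H = LinearMap.ker
                  ((LinearMap.proj 1 : (Fin 3 → ℂ) →ₗ[ℂ] ℂ) -
                    ζ ^ ((x.2 : ℕ) + k * p) • LinearMap.proj 2) ∨
             H = LinearMap.ker
                  ((LinearMap.proj 0 : (Fin 3 → ℂ) →ₗ[ℂ] ℂ) -
                    ζ ^ ((x.1 : ℕ) + (x.2 : ℕ) + k * p) • LinearMap.proj 2)) } :=
        ⟨0, hq, Or.inl rfl⟩
      rw [hxy'] at hmem
      obtain ⟨k, hk, h | h | h⟩ := hmem
      · exact hexp _ _ k x.1.isLt y.1.isLt hk (ker01_inj h)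
      · exact absurd h (ker01_ne_ker12 (pow_ne_zero _ hζ0))
      · exact absurd h (ker01_ne_ker02 (pow_ne_zero _ hζ0))
    have hb : (x.2 : ℕ) = (y.2 : ℕ) := by
      have hmem : LinearMap.ker
          ((LinearMap.proj 1 : (Fin 3 → ℂ) →ₗ[ℂ] ℂ) -
            ζ ^ ((x.2 : ℕ) + 0 * p) • LinearMap.proj 2) ∈
          { H | ∃ k : ℕ, k < q ∧
            (H = LinearMap.ker
                  ((LinearMap.proj 0 : (Fin 3 → ℂ) →ₗ[ℂ] ℂ) -
                    ζ ^ ((x.1 : ℕ) + k * p) • LinearMap.proj 1) ∨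
             H = LinearMap.ker
                  ((LinearMap.proj 1 : (Fin 3 → ℂ) →ₗ[ℂ] ℂ) -
                    ζ ^ ((x.2 : ℕ) + k * p) • LinearMap.proj 2) ∨
             H = LinearMap.ker
                  ((LinearMap.proj 0 : (Fin 3 → ℂ) →ₗ[ℂ] ℂ) -
                    ζ ^ ((x.1 : ℕ) + (x.2 : ℕ) + k * p) • LinearMap.proj 2)) } :=
        ⟨0, hq, Or.inr (Or.inl rfl)⟩
      rw [hxy'] at hmem
      obtain ⟨k, hk, h | h | h⟩ := hmem
      · exact absurd h.symm (ker01_ne_ker12 (pow_ne_zero _ hζ0))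
      · exact hexp _ _ k x.2.isLt y.2.isLt hk (ker12_inj h)
      · exact absurd h (ker12_ne_ker02 _ _)
    exact Prod.ext (Fin.ext ha) (Fin.ext hb)
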